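/- Fix h₂, h₃ ∈ ℝ with h₂², h₃² > 0 and P₁ = P₂ = P₃ = P > 0. Suppose h₃² ≥ h₂². With β = 0 and α = γ = 1/2, the simultaneous UL/DL scheme achieves symmetric rate min{(1/2)·C(h₂²P), (1/2)·C⁺(h₂²P − 1/2), (1/2)·C(2h₂²P)} = (1/2)·C⁺(h₂²P − 1/2) whenever h₂²P ≥ 1/2, and this rate is within 1/4 bit of (1/2)·C(h₂²P). -/
import Mathlib


noncomputable def C (x : ℝ) : ℝ := (1/2) * Real.logb 2 (1 + x)

noncomputable def Cplus (y : ℝ) : ℝ := max 0 (C y)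

lemma C_mono {x y : ℝ} (hx : -1 < x) (hxy : x ≤ y) : C x ≤ C y := by
  unfold C
  have : (0:ℝ) < 1 + x := by linarith
  gcongr <;> linarith

lemma C_nonneg {x : ℝ} (hx : 0 ≤ x) : 0 ≤ C x := by
  have := C_mono (x := 0) (by norm_num) hx
  simpa [C] using this

theorem sim_scheme_half_phases (P h₂ h₃ : ℝ) (hP : 0 < P)
    (h2pos : 0 < h₂^2) (h3pos : 0 < h₃^2) (hord : h₂^2 ≤ h₃^2)
    (hsnr : 1/2 ≤ h₂^2 * P) :
    min (min ((1/2) * C (h₂^2 * P)) ((1/2) * Cplus (h₂^2 * P - 1/2)))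
        ((1/2) * C (2 * h₂^2 * P)) = (1/2) * Cplus (h₂^2 * P - 1/2) ∧
    |(1/2) * C (h₂^2 * P) - (1/2) * Cplus (h₂^2 * P - 1/2)| ≤ 1/4 := by
  set x := h₂^2 * P with hx
  have hx0 : (0:ℝ) ≤ x - 1/2 := by linarith
  have hCp : Cplus (x - 1/2) = C (x - 1/2) := by
    unfold Cplus; exact max_eq_right (C_nonneg hx0)
  have h1 : C (x - 1/2) ≤ C x := C_mono (by linarith) (by linarith)
  have h2 : C x ≤ C (2 * x) := C_mono (by linarith) (by linarith)
  have hgap : C x - C (x - 1/2) ≤ 1/2 := by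
    have hpos : (0:ℝ) < 1/2 + x := by linarith
    have key : (1:ℝ) + x ≤ 2 * (1/2 + x) := by linarith
    have hlog : Real.logb 2 (1 + x) ≤ Real.logb 2 (2 * (1/2 + x)) := by
      gcongr <;> linarith
    rw [Real.logb_mul (by norm_num) (by positivity)] at hlog
    have h22 : Real.logb 2 (2:ℝ) = 1 := by
      simp [Real.logb_self_eq_one]
    unfold C
    have hx12 : (1:ℝ) + (x - 1/2) = 1/2 + x := by ring
    rw [hx12]
    nlinarith [hlog, h22]
  constructor
  · rw [hCp]
    have h2x : 2 * h₂^2 * P = 2 * x := by rw [hx]; ring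
    have hinner : min ((1/2) * C x) ((1/2) * C (x - 1/2)) = (1/2) * C (x - 1/2) :=
      min_eq_right (by linarith)
    rw [h2x, hinner, min_eq_left (by linarith)]
  · rw [hCp, abs_of_nonneg (by linarith)]
    linarith
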